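/- Let C and H be commutative Hopf algebras over a field k such that C is an H-bicomodule Hopf algebra, let B be a Rota-Baxter co-operator on H, let R : C → C be a linear map, and define B̃ : C ⋉ H → C ⋉ H by B̃(c ⋉ h) = R(c₍₀₎[0]) ⋉ B(c₍₋₁₎ · c₍₀₎[1] · h). If B̃ is an algebra map, then R is an algebra map, i.e. R(cd) = R(c)R(d) for all c, d ∈ C and R(1) = 1. -/

import Mathlib

open TensorProduct

noncomputable section

variable {k : Type} [Field k]

/-- `B` is a Rota–Baxter co-operator w.r.t. a comultiplication `Δ` and antipode `S` on a
commutative algebra `V`:  `B` is an algebra map satisfying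
`B(x₁) ⊗ B(x₂) = B(x)₁ · B(B(x)₂ · S(B(x)₄)) ⊗ B(x)₃` for all `x`, where the Sweedler
components are given by arbitrary finite representations of the (iterated)
comultiplications. -/
def IsRotaBaxterCoOp {V : Type} [CommRing V] [Module k V]
    (Δ : V →ₗ[k] V ⊗[k] V) (S : V →ₗ[k] V) (B : V →ₗ[k] V) : Prop :=
  B 1 = 1 ∧ (∀ x y : V, B (x * y) = B x * B y) ∧
  ∀ (x : V) (ι κ κ1 κ2 : Type) (s : Finset ι) (y z : ι → V)
    (t : Finset κ) (u v : κ → V)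
    (t1 : κ → Finset κ1) (u1 u2 : κ → κ1 → V)
    (t2 : κ → Finset κ2) (v1 v2 : κ → κ2 → V),
    Δ x = ∑ i ∈ s, y i ⊗ₜ[k] z i →
    Δ (B x) = ∑ j ∈ t, u j ⊗ₜ[k] v j →
    (∀ j, Δ (u j) = ∑ l ∈ t1 j, u1 j l ⊗ₜ[k] u2 j l) →
    (∀ j, Δ (v j) = ∑ m ∈ t2 j, v1 j m ⊗ₜ[k] v2 j m) →
    ∑ i ∈ s, B (y i) ⊗ₜ[k] B (z i) =
      ∑ j ∈ t, ∑ l ∈ t1 j, ∑ m ∈ t2 j,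
        (u1 j l * B (u2 j l * S (v2 j m))) ⊗ₜ[k] v1 j m

/-- The data of an `H`-bicomodule Hopf algebra structure on `C`, relative to prescribed
comultiplications `ΔC, ΔH`, counits `εC, εH` and antipode `SC`:  a left and a right
`H`-coaction which are algebra maps, commute with each other, are comodule-coalgebra
maps, and commute with the antipode. -/
structure BicomoduleHopfData (k : Type) [Field k] (C H : Type) [CommRing C] [CommRing H]
    [Algebra k C] [Algebra k H]
    (ΔC : C →ₗ[k] C ⊗[k] C) (εC : C →ₗ[k] k) (SC : C →ₗ[k] C)
    (ΔH : H →ₗ[k] H ⊗[k] H) (εH : H →ₗ[k] k) where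
  rhol : C →ₗ[k] H ⊗[k] C
  rhor : C →ₗ[k] C ⊗[k] H
  coassoc_l : (TensorProduct.assoc k H H C).toLinearMap ∘ₗ LinearMap.rTensor C ΔH ∘ₗ rhol =
    LinearMap.lTensor H rhol ∘ₗ rhol
  counit_coact_l : (TensorProduct.lid k C).toLinearMap ∘ₗ LinearMap.rTensor C εH ∘ₗ rhol =
    LinearMap.id
  coassoc_r : (TensorProduct.assoc k C H H).toLinearMap ∘ₗ LinearMap.rTensor H rhor ∘ₗ rhor =
    LinearMap.lTensor C ΔH ∘ₗ rhor
  counit_coact_r : (TensorProduct.rid k C).toLinearMap ∘ₗ LinearMap.lTensor C εH ∘ₗ rhor =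
    LinearMap.id
  bicomodule : LinearMap.lTensor H rhor ∘ₗ rhol =
    (TensorProduct.assoc k H C H).toLinearMap ∘ₗ LinearMap.rTensor H rhol ∘ₗ rhor
  rhol_one : rhol 1 = 1 ⊗ₜ[k] 1
  rhol_mul : ∀ c d : C, rhol (c * d) = rhol c * rhol d
  rhor_one : rhor 1 = 1 ⊗ₜ[k] 1
  rhor_mul : ∀ c d : C, rhor (c * d) = rhor c * rhor d
  comul_rhol : LinearMap.lTensor H ΔC ∘ₗ rhol =
    TensorProduct.map (LinearMap.mul' k H) LinearMap.id ∘ₗ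
      (TensorProduct.tensorTensorTensorComm k H C H C).toLinearMap ∘ₗ
        TensorProduct.map rhol rhol ∘ₗ ΔC
  comul_rhor : LinearMap.rTensor H ΔC ∘ₗ rhor =
    TensorProduct.map LinearMap.id (LinearMap.mul' k H) ∘ₗ
      (TensorProduct.tensorTensorTensorComm k C H C H).toLinearMap ∘ₗ
        TensorProduct.map rhor rhor ∘ₗ ΔC
  counit_rhol : (TensorProduct.rid k H).toLinearMap ∘ₗ LinearMap.lTensor H εC ∘ₗ rhol =
    Algebra.linearMap k H ∘ₗ εC
  counit_rhor : (TensorProduct.lid k H).toLinearMap ∘ₗ LinearMap.rTensor H εC ∘ₗ rhor =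
    Algebra.linearMap k H ∘ₗ εC
  antipode_rhol : rhol ∘ₗ SC = LinearMap.lTensor H SC ∘ₗ rhol
  antipode_rhor : rhor ∘ₗ SC = LinearMap.rTensor H SC ∘ₗ rhor

variable {C H : Type} [CommRing C] [CommRing H] [Algebra k C] [Algebra k H]
  {ΔC : C →ₗ[k] C ⊗[k] C} {εC : C →ₗ[k] k} {SC : C →ₗ[k] C}
  {ΔH : H →ₗ[k] H ⊗[k] H} {εH : H →ₗ[k] k}

/-- `Dm` is the comultiplication of the L-R smash coproduct `C ⋉ H`:
`Δ(c ⋉ h) = (c₁[0] ⋉ c₂₍₋₁₎h₁) ⊗ (c₂₍₀₎ ⋉ h₂c₁[1])`. -/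
def IsSmashCoComul (D : BicomoduleHopfData k C H ΔC εC SC ΔH εH)
    (Dm : C ⊗[k] H →ₗ[k] (C ⊗[k] H) ⊗[k] (C ⊗[k] H)) : Prop :=
  ∀ (c : C) (h : H) (ι κ ι1 ι2 : Type) (s : Finset ι) (c1 c2 : ι → C)
    (t : Finset κ) (h1 h2 : κ → H)
    (p : ι → Finset ι1) (cO : ι → ι1 → C) (cI : ι → ι1 → H)
    (q : ι → Finset ι2) (cm : ι → ι2 → H) (cz : ι → ι2 → C),
    ΔC c = ∑ i ∈ s, c1 i ⊗ₜ[k] c2 i →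
    ΔH h = ∑ j ∈ t, h1 j ⊗ₜ[k] h2 j →
    (∀ i, D.rhor (c1 i) = ∑ a ∈ p i, cO i a ⊗ₜ[k] cI i a) →
    (∀ i, D.rhol (c2 i) = ∑ b ∈ q i, cm i b ⊗ₜ[k] cz i b) →
    Dm (c ⊗ₜ[k] h) = ∑ i ∈ s, ∑ j ∈ t, ∑ a ∈ p i, ∑ b ∈ q i,
      (cO i a ⊗ₜ[k] (cm i b * h1 j)) ⊗ₜ[k] (cz i b ⊗ₜ[k] (h2 j * cI i a))

/-- `v` is the antipode of the L-R smash coproduct `C ⋉ H`: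
`S(c ⋉ h) = S_C(c₍₀₎[0]) ⋉ S_H(c₍₋₁₎ c₍₀₎[1] h)`. -/
def IsSmashCoAntipode (D : BicomoduleHopfData k C H ΔC εC SC ΔH εH) (SH : H →ₗ[k] H)
    (v : C ⊗[k] H →ₗ[k] C ⊗[k] H) : Prop :=
  ∀ (c : C) (h : H) (ι ι1 : Type) (s : Finset ι) (mm : ι → H) (zz : ι → C)
    (p : ι → Finset ι1) (w : ι → ι1 → C) (u : ι → ι1 → H),
    D.rhol c = ∑ i ∈ s, mm i ⊗ₜ[k] zz i →
    (∀ i, D.rhor (zz i) = ∑ j ∈ p i, w i j ⊗ₜ[k] u i j) →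
    v (c ⊗ₜ[k] h) = ∑ i ∈ s, ∑ j ∈ p i, SC (w i j) ⊗ₜ[k] SH (mm i * u i j * h)

/-- `Bt` is the map `B̃(c ⋉ h) = R(c₍₀₎[0]) ⋉ B(c₍₋₁₎ c₍₀₎[1] h)` on `C ⋉ H`. -/
def IsBtilde (D : BicomoduleHopfData k C H ΔC εC SC ΔH εH)
    (R : C →ₗ[k] C) (B : H →ₗ[k] H)
    (Bt : C ⊗[k] H →ₗ[k] C ⊗[k] H) : Prop :=
  ∀ (c : C) (h : H) (ι ι1 : Type) (s : Finset ι) (mm : ι → H) (zz : ι → C)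
    (p : ι → Finset ι1) (w : ι → ι1 → C) (u : ι → ι1 → H),
    D.rhol c = ∑ i ∈ s, mm i ⊗ₜ[k] zz i →
    (∀ i, D.rhor (zz i) = ∑ j ∈ p i, w i j ⊗ₜ[k] u i j) →
    Bt (c ⊗ₜ[k] h) = ∑ i ∈ s, ∑ j ∈ p i, R (w i j) ⊗ₜ[k] B (mm i * u i j * h)


section AuxRB

variable {Haux : Type} [CommRing Haux] [HopfAlgebra k Haux]

def fpair {M N : Type} [AddCommMonoid M] [Module k M] [AddCommMonoid N] [Module k N]
    (φ : M →ₗ[k] k) (ψ : N →ₗ[k] k) : M ⊗[k] N →ₗ[k] k :=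
  TensorProduct.lift (((LinearMap.mul k k).comp φ).compl₂ ψ)

@[simp] lemma fpair_tmul {M N : Type} [AddCommMonoid M] [Module k M] [AddCommMonoid N]
    [Module k N] (φ : M →ₗ[k] k) (ψ : N →ₗ[k] k) (a : M) (b : N) :
    fpair φ ψ (a ⊗ₜ[k] b) = φ a * ψ b := rfl

lemma sum_counit_smul {ι : Type} (s : Finset ι) (a b : ι → Haux) (x : Haux)
    (h : Coalgebra.comul (R := k) x = ∑ i ∈ s, a i ⊗ₜ[k] b i) :
    ∑ i ∈ s, Coalgebra.counit (R := k) (a i) • b i = x := by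
  have := congrArg (fun t => (TensorProduct.lid k Haux)
    ((Coalgebra.counit (R := k) (A := Haux)).rTensor Haux t)) h
  simpa [map_sum] using this.symm

lemma sum_smul_counit {ι : Type} (s : Finset ι) (a b : ι → Haux) (x : Haux)
    (h : Coalgebra.comul (R := k) x = ∑ i ∈ s, a i ⊗ₜ[k] b i) :
    ∑ i ∈ s, Coalgebra.counit (R := k) (b i) • a i = x := by
  have := congrArg (fun t => (TensorProduct.rid k Haux)
    ((Coalgebra.counit (R := k) (A := Haux)).lTensor Haux t)) h
  simpa [map_sum] using this.symm

lemma sum_counit_mul {ι : Type} (s : Finset ι) (a b : ι → Haux) (x : Haux) (φ : Haux →ₗ[k] k)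
    (h : Coalgebra.comul (R := k) x = ∑ i ∈ s, a i ⊗ₜ[k] b i) :
    ∑ i ∈ s, Coalgebra.counit (R := k) (a i) * φ (b i) = φ x := by
  have := congrArg φ (sum_counit_smul s a b x h)
  simpa [map_sum, map_smul, smul_eq_mul] using this

lemma sum_mul_counit {ι : Type} (s : Finset ι) (a b : ι → Haux) (x : Haux) (φ : Haux →ₗ[k] k)
    (h : Coalgebra.comul (R := k) x = ∑ i ∈ s, a i ⊗ₜ[k] b i) :
    ∑ i ∈ s, φ (a i) * Coalgebra.counit (R := k) (b i) = φ x := by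
  have := congrArg φ (sum_smul_counit s a b x h)
  simp only [map_sum, map_smul, smul_eq_mul] at this
  simpa [mul_comm] using this

lemma sum_mul_antipode'' {ι : Type} (s : Finset ι) (a b : ι → Haux) (x : Haux)
    (h : Coalgebra.comul (R := k) x = ∑ i ∈ s, a i ⊗ₜ[k] b i) :
    ∑ i ∈ s, a i * HopfAlgebra.antipode (R := k) (b i)
      = algebraMap k Haux (Coalgebra.counit (R := k) x) := by
  have := congrArg (fun t => LinearMap.mul' k Haux
    ((HopfAlgebra.antipode (R := k) (A := Haux)).lTensor Haux t)) h
  simpa [map_sum] using this.symm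

lemma chi_algebraMap (B : Haux →ₗ[k] Haux) (hB1 : B 1 = 1) (r : k) :
    Coalgebra.counit (R := k) (B (algebraMap k Haux r)) = r := by
  rw [Algebra.algebraMap_eq_smul_one, map_smul, hB1, map_smul, smul_eq_mul,
    Bialgebra.counit_one, mul_one]

/-- the convolution-idempotency of `χ = ε ∘ B`, from the Rota-Baxter identity. -/
lemma chi_conv (B : Haux →ₗ[k] Haux)
    (hB : IsRotaBaxterCoOp (k := k) Coalgebra.comul (HopfAlgebra.antipode (R := k)) B)
    {ι : Type} (s : Finset ι) (a b : ι → Haux) (x : Haux)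
    (h : Coalgebra.comul (R := k) x = ∑ i ∈ s, a i ⊗ₜ[k] b i) :
    ∑ i ∈ s, Coalgebra.counit (R := k) (B (a i)) * Coalgebra.counit (R := k) (B (b i))
      = Coalgebra.counit (R := k) (B x) := by
  classical
  obtain ⟨t, ht⟩ := TensorProduct.exists_finset (R := k) (Coalgebra.comul (R := k) (B x))
  set t1 : Haux × Haux → Finset (Haux × Haux) := fun j =>
    (TensorProduct.exists_finset (R := k) (Coalgebra.comul (R := k) j.1)).choose with ht1def
  have h1 : ∀ j : Haux × Haux, Coalgebra.comul (R := k) j.1 = ∑ l ∈ t1 j, l.1 ⊗ₜ[k] l.2 := fun j =>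
    (TensorProduct.exists_finset (R := k) (Coalgebra.comul (R := k) j.1)).choose_spec
  set t2 : Haux × Haux → Finset (Haux × Haux) := fun j =>
    (TensorProduct.exists_finset (R := k) (Coalgebra.comul (R := k) j.2)).choose with ht2def
  have h2 : ∀ j : Haux × Haux, Coalgebra.comul (R := k) j.2 = ∑ m ∈ t2 j, m.1 ⊗ₜ[k] m.2 := fun j =>
    (TensorProduct.exists_finset (R := k) (Coalgebra.comul (R := k) j.2)).choose_spec
  have key := hB.2.2 x ι (Haux × Haux) (Haux × Haux) (Haux × Haux) s a b t Prod.fst Prod.snd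
    t1 (fun _ l => l.1) (fun _ l => l.2) t2 (fun _ m => m.1) (fun _ m => m.2) h ht h1 h2
  have keyE := congrArg (fpair (Coalgebra.counit (R := k) (A := Haux))
    (Coalgebra.counit (R := k) (A := Haux))) key
  simp only [map_sum, fpair_tmul] at keyE
  rw [keyE]
  set ε : Haux →ₗ[k] k := Coalgebra.counit (R := k) (A := Haux)
  have hterm : ∀ j ∈ t, (∑ l ∈ t1 j, ∑ m ∈ t2 j,
      ε (l.1 * B (l.2 * HopfAlgebra.antipode (R := k) m.2)) * ε m.1)
      = ε (B j.1) * ε (B (HopfAlgebra.antipode (R := k) j.2)) := by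
    intro j _
    have : ∀ l m : Haux × Haux,
        ε (l.1 * B (l.2 * HopfAlgebra.antipode (R := k) m.2)) * ε m.1
        = (ε l.1 * ε (B l.2)) * (ε m.1 * ε (B (HopfAlgebra.antipode (R := k) m.2))) := by
      intro l m
      rw [Bialgebra.counit_mul, hB.2.1, Bialgebra.counit_mul]
      ring
    rw [Finset.sum_congr rfl (fun l _ => Finset.sum_congr rfl (fun m _ => this l m))]
    rw [← Finset.sum_mul_sum]
    have e1 : (∑ l ∈ t1 j, ε l.1 * ε (B l.2)) = ε (B j.1) := by
      simpa using sum_counit_mul (t1 j) (fun l => l.1) (fun l => l.2) j.1 (ε ∘ₗ B) (h1 j)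
    have e2 : (∑ m ∈ t2 j, ε m.1 * ε (B (HopfAlgebra.antipode (R := k) m.2)))
        = ε (B (HopfAlgebra.antipode (R := k) j.2)) := by
      simpa using sum_counit_mul (t2 j) (fun m => m.1) (fun m => m.2) j.2
        (ε ∘ₗ B ∘ₗ HopfAlgebra.antipode (R := k)) (h2 j)
    rw [e1, e2]
  rw [Finset.sum_congr rfl hterm]
  have : ∀ j ∈ t, ε (B j.1) * ε (B (HopfAlgebra.antipode (R := k) j.2))
      = ε (B (j.1 * HopfAlgebra.antipode (R := k) j.2)) := by
    intro j _; rw [hB.2.1, Bialgebra.counit_mul]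
  rw [Finset.sum_congr rfl this, ← map_sum, ← map_sum,
    sum_mul_antipode'' t _ _ (B x) ht, chi_algebraMap B hB.1]

set_option synthInstance.maxHeartbeats 1000000 in
set_option maxHeartbeats 1000000 in
/-- `ε ∘ B = ε` when `B` is a Rota-Baxter co-operator. -/
lemma chi_eq_counit (B : Haux →ₗ[k] Haux)
    (hB : IsRotaBaxterCoOp (k := k) Coalgebra.comul (HopfAlgebra.antipode (R := k)) B)
    (x : Haux) : Coalgebra.counit (R := k) (B x) = Coalgebra.counit (R := k) x := by
  classical
  set ε : Haux →ₗ[k] k := Coalgebra.counit (R := k) (A := Haux) with hεdef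
  set S : Haux →ₗ[k] Haux := HopfAlgebra.antipode (R := k) (A := Haux) with hSdef
  set χ : Haux →ₗ[k] k := ε ∘ₗ B with hχdef
  obtain ⟨s, hs⟩ := TensorProduct.exists_finset (R := k) (Coalgebra.comul (R := k) x)
  set p : Haux × Haux → Finset (Haux × Haux) := fun i =>
    (TensorProduct.exists_finset (R := k) (Coalgebra.comul (R := k) i.1)).choose with hpdef
  have hp : ∀ i : Haux × Haux, Coalgebra.comul (R := k) i.1 = ∑ l ∈ p i, l.1 ⊗ₜ[k] l.2 := fun i =>
    (TensorProduct.exists_finset (R := k) (Coalgebra.comul (R := k) i.1)).choose_spec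
  set q : Haux × Haux → Finset (Haux × Haux) := fun i =>
    (TensorProduct.exists_finset (R := k) (Coalgebra.comul (R := k) i.2)).choose with hqdef
  have hq : ∀ i : Haux × Haux, Coalgebra.comul (R := k) i.2 = ∑ m ∈ q i, m.1 ⊗ₜ[k] m.2 := fun i =>
    (TensorProduct.exists_finset (R := k) (Coalgebra.comul (R := k) i.2)).choose_spec
  have hco := Coalgebra.coassoc_apply (R := k) x
  have key := congrArg (fpair χ (fpair χ (χ ∘ₗ S))) hco
  rw [hs] at key
  simp only [map_sum, LinearMap.rTensor_tmul, LinearMap.lTensor_tmul] at key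
  -- left side: rewrite comul i.1 via hp
  have keyL : (∑ i ∈ s, fpair χ (fpair χ (χ ∘ₗ S))
      (TensorProduct.assoc k Haux Haux Haux ((Coalgebra.comul (R := k) i.1) ⊗ₜ[k] i.2))) = ε x := by
    have hterm : ∀ i ∈ s, fpair χ (fpair χ (χ ∘ₗ S))
        (TensorProduct.assoc k Haux Haux Haux ((Coalgebra.comul (R := k) i.1) ⊗ₜ[k] i.2))
        = χ i.1 * χ (S i.2) := by
      intro i _
      rw [hp i, TensorProduct.sum_tmul, map_sum, map_sum]
      simp only [TensorProduct.assoc_tmul, fpair_tmul, LinearMap.comp_apply, ← mul_assoc]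
      rw [← Finset.sum_mul]
      congr 1
      exact chi_conv B hB (p i) (fun l => l.1) (fun l => l.2) i.1 (hp i)
    rw [Finset.sum_congr rfl hterm]
    have : ∀ i ∈ s, χ i.1 * χ (S i.2) = χ (i.1 * S i.2) := by
      intro i _
      show ε (B i.1) * ε (B (S i.2)) = ε (B (i.1 * S i.2))
      rw [hB.2.1, Bialgebra.counit_mul]
    rw [Finset.sum_congr rfl this, ← map_sum]
    have hsum : (∑ i ∈ s, i.1 * S i.2) = algebraMap k Haux (ε x) :=
      sum_mul_antipode'' s (fun i => i.1) (fun i => i.2) x hs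
    rw [hsum]
    exact chi_algebraMap B hB.1 (ε x)
  -- right side
  have keyR : (∑ i ∈ s, fpair χ (fpair χ (χ ∘ₗ S)) (i.1 ⊗ₜ[k] (Coalgebra.comul (R := k) i.2)))
      = χ x := by
    have hterm : ∀ i ∈ s, fpair χ (fpair χ (χ ∘ₗ S)) (i.1 ⊗ₜ[k] (Coalgebra.comul (R := k) i.2))
        = χ i.1 * ε i.2 := by
      intro i _
      rw [hq i, TensorProduct.tmul_sum, map_sum]
      simp only [fpair_tmul, LinearMap.comp_apply]
      rw [← Finset.mul_sum]
      congr 1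
      have : ∀ m ∈ q i, χ m.1 * χ (S m.2) = χ (m.1 * S m.2) := by
        intro m _
        show ε (B m.1) * ε (B (S m.2)) = ε (B (m.1 * S m.2))
        rw [hB.2.1, Bialgebra.counit_mul]
      rw [Finset.sum_congr rfl this, ← map_sum]
      have hsum : (∑ m ∈ q i, m.1 * S m.2) = algebraMap k Haux (ε i.2) :=
        sum_mul_antipode'' (q i) (fun m => m.1) (fun m => m.2) i.2 (hq i)
      rw [hsum]
      exact chi_algebraMap B hB.1 (ε i.2)
    rw [Finset.sum_congr rfl hterm]
    exact sum_mul_counit s (fun i => i.1) (fun i => i.2) x χ hs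
  rw [keyL, keyR] at key
  exact key.symm


end AuxRB

/-- If `B̃(c ⋉ h) = R(c₍₀₎[0]) ⋉ B(c₍₋₁₎ c₍₀₎[1] h)` is an algebra map on the L-R smash
coproduct `C ⋉ H` (with componentwise multiplication), then `R` is an algebra map. -/
theorem algebraMap_of_Btilde_algebraMap
    {k C H : Type} [Field k] [CommRing C] [CommRing H] [HopfAlgebra k C] [HopfAlgebra k H]
    (D : BicomoduleHopfData k C H Coalgebra.comul Coalgebra.counit (HopfAlgebra.antipode k)
      Coalgebra.comul Coalgebra.counit)
    (R : C →ₗ[k] C) (B : H →ₗ[k] H)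
    (hB : IsRotaBaxterCoOp Coalgebra.comul (HopfAlgebra.antipode (R := k)) B)
    (Bt : C ⊗[k] H →ₗ[k] C ⊗[k] H) (hBt : IsBtilde D R B Bt)
    (hmul : ∀ X Y : C ⊗[k] H, Bt (X * Y) = Bt X * Bt Y)
    (hone : Bt 1 = 1) :
    (∀ c d : C, R (c * d) = R c * R d) ∧ R 1 = 1 := by
  classical
  have hchi : ∀ h : H, Coalgebra.counit (R := k) (B h) = Coalgebra.counit (R := k) h :=
    chi_eq_counit B hB
  set P : C ⊗[k] H →ₗ[k] C :=
    (TensorProduct.rid k C).toLinearMap ∘ₗ LinearMap.lTensor C (Coalgebra.counit (R := k))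
    with hPdef
  have hPt : ∀ (a : C) (h : H), P (a ⊗ₜ[k] h) = Coalgebra.counit (R := k) h • a := by
    intro a h
    simp [hPdef]
  -- R 1 = 1
  have hR1 : R 1 = 1 := by
    have hrl : D.rhol (1 : C) = ∑ _i ∈ (Finset.univ : Finset Unit),
        (1 : H) ⊗ₜ[k] (1 : C) := by
      simp [D.rhol_one]
    have hrr : ∀ _i : Unit, D.rhor (1 : C) = ∑ _j ∈ (Finset.univ : Finset Unit),
        (1 : C) ⊗ₜ[k] (1 : H) := by
      intro _; simp [D.rhor_one]
    have h1 := hBt 1 1 Unit Unit Finset.univ (fun _ => 1) (fun _ => 1)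
      (fun _ => Finset.univ) (fun _ _ => 1) (fun _ _ => 1) hrl hrr
    simp only [Finset.univ_unique, Finset.sum_singleton, one_mul, mul_one] at h1
    rw [show ((1:C) ⊗ₜ[k] (1:H)) = (1 : C ⊗[k] H) from rfl, hone, hB.1] at h1
    have h2 := congrArg P h1
    rw [show (1 : C ⊗[k] H) = ((1:C) ⊗ₜ[k] (1:H)) from rfl] at h2
    rw [hPt, hPt] at h2
    simpa using h2.symm
  refine ⟨fun c d => ?_, hR1⟩
  -- representations of the coactions
  obtain ⟨sc, hsc⟩ := TensorProduct.exists_finset (R := k) (D.rhol c)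
  obtain ⟨sd, hsd⟩ := TensorProduct.exists_finset (R := k) (D.rhol d)
  set pc : H × C → Finset (C × H) := fun i =>
    (TensorProduct.exists_finset (R := k) (D.rhor i.2)).choose with hpcdef
  have hpc : ∀ i : H × C, D.rhor i.2 = ∑ j ∈ pc i, j.1 ⊗ₜ[k] j.2 := fun i =>
    (TensorProduct.exists_finset (R := k) (D.rhor i.2)).choose_spec
  set pd : H × C → Finset (C × H) := fun i =>
    (TensorProduct.exists_finset (R := k) (D.rhor i.2)).choose with hpddef
  have hpd : ∀ i : H × C, D.rhor i.2 = ∑ j ∈ pd i, j.1 ⊗ₜ[k] j.2 := fun i =>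
    (TensorProduct.exists_finset (R := k) (D.rhor i.2)).choose_spec
  have Bc := hBt c 1 (H × C) (C × H) sc Prod.fst Prod.snd pc
    (fun _ j => j.1) (fun _ j => j.2) hsc hpc
  have Bd := hBt d 1 (H × C) (C × H) sd Prod.fst Prod.snd pd
    (fun _ j => j.1) (fun _ j => j.2) hsd hpd
  have hlcd : D.rhol (c * d) = ∑ q ∈ sc ×ˢ sd,
      (q.1.1 * q.2.1) ⊗ₜ[k] (q.1.2 * q.2.2) := by
    rw [D.rhol_mul, hsc, hsd, Finset.sum_mul_sum, Finset.sum_product]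
    exact Finset.sum_congr rfl fun i _ => Finset.sum_congr rfl fun j _ =>
      Algebra.TensorProduct.tmul_mul_tmul _ _ _ _
  have hrcd : ∀ q : (H × C) × (H × C), D.rhor (q.1.2 * q.2.2)
      = ∑ j ∈ pc q.1 ×ˢ pd q.2, (j.1.1 * j.2.1) ⊗ₜ[k] (j.1.2 * j.2.2) := by
    intro q
    rw [D.rhor_mul, hpc q.1, hpd q.2, Finset.sum_mul_sum, Finset.sum_product]
    exact Finset.sum_congr rfl fun i _ => Finset.sum_congr rfl fun j _ =>
      Algebra.TensorProduct.tmul_mul_tmul _ _ _ _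
  have Bcd := hBt (c * d) 1 ((H × C) × (H × C)) ((C × H) × (C × H)) (sc ×ˢ sd)
    (fun q => q.1.1 * q.2.1) (fun q => q.1.2 * q.2.2)
    (fun q => pc q.1 ×ˢ pd q.2) (fun _ j => j.1.1 * j.2.1) (fun _ j => j.1.2 * j.2.2)
    hlcd hrcd
  have EQ := hmul (c ⊗ₜ[k] 1) (d ⊗ₜ[k] 1)
  rw [show (c ⊗ₜ[k] (1:H)) * (d ⊗ₜ[k] (1:H)) = (c * d) ⊗ₜ[k] (1:H) by
        rw [Algebra.TensorProduct.tmul_mul_tmul, one_mul],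
      Bcd, Bc, Bd] at EQ
  have EQ2 := congrArg P EQ
  simp only [map_sum, Finset.sum_mul, Finset.mul_sum, Algebra.TensorProduct.tmul_mul_tmul,
    hPt, mul_one] at EQ2
  -- recovery of c and d from their coaction representations
  have inner_c : ∀ i : H × C, (∑ j ∈ pc i, Coalgebra.counit (R := k) j.2 • j.1) = i.2 := by
    intro i
    have h0 := LinearMap.congr_fun D.counit_coact_r i.2
    simpa [LinearMap.comp_apply, hpc i, map_sum] using h0
  have inner_d : ∀ i : H × C, (∑ j ∈ pd i, Coalgebra.counit (R := k) j.2 • j.1) = i.2 := by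
    intro i
    have h0 := LinearMap.congr_fun D.counit_coact_r i.2
    simpa [LinearMap.comp_apply, hpd i, map_sum] using h0
  have recc : (∑ i ∈ sc, ∑ j ∈ pc i,
      (Coalgebra.counit (R := k) i.1 * Coalgebra.counit (R := k) j.2) • j.1) = c := by
    have outer : (∑ i ∈ sc, Coalgebra.counit (R := k) i.1 • i.2) = c := by
      have h0 := LinearMap.congr_fun D.counit_coact_l c
      simpa [LinearMap.comp_apply, hsc, map_sum] using h0
    refine Eq.trans (Finset.sum_congr rfl fun i _ => ?_) outer
    rw [← inner_c i, Finset.smul_sum]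
    exact Finset.sum_congr rfl fun j _ => mul_smul _ _ _
  have recd : (∑ i ∈ sd, ∑ j ∈ pd i,
      (Coalgebra.counit (R := k) i.1 * Coalgebra.counit (R := k) j.2) • j.1) = d := by
    have outer : (∑ i ∈ sd, Coalgebra.counit (R := k) i.1 • i.2) = d := by
      have h0 := LinearMap.congr_fun D.counit_coact_l d
      simpa [LinearMap.comp_apply, hsd, map_sum] using h0
    refine Eq.trans (Finset.sum_congr rfl fun i _ => ?_) outer
    rw [← inner_d i, Finset.smul_sum]
    exact Finset.sum_congr rfl fun j _ => mul_smul _ _ _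
  have hc' : R c = ∑ i ∈ sc, ∑ j ∈ pc i,
      (Coalgebra.counit (R := k) i.1 * Coalgebra.counit (R := k) j.2) • R j.1 := by
    conv_lhs => rw [← recc]
    simp only [map_sum, map_smul]
  have hd' : R d = ∑ i ∈ sd, ∑ j ∈ pd i,
      (Coalgebra.counit (R := k) i.1 * Coalgebra.counit (R := k) j.2) • R j.1 := by
    conv_lhs => rw [← recd]
    simp only [map_sum, map_smul]
  -- c*d as a quadruple sum
  have hcd4 : R (c * d) = ∑ i ∈ sc, ∑ j ∈ pc i, ∑ i' ∈ sd, ∑ j' ∈ pd i',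
      ((Coalgebra.counit (R := k) i.1 * Coalgebra.counit (R := k) j.2) *
        (Coalgebra.counit (R := k) i'.1 * Coalgebra.counit (R := k) j'.2)) •
        R (j.1 * j'.1) := by
    have hcd : c * d = ∑ i ∈ sc, ∑ j ∈ pc i, ∑ i' ∈ sd, ∑ j' ∈ pd i',
        ((Coalgebra.counit (R := k) i.1 * Coalgebra.counit (R := k) j.2) *
          (Coalgebra.counit (R := k) i'.1 * Coalgebra.counit (R := k) j'.2)) •
          (j.1 * j'.1) := by
      conv_lhs => rw [← recc, ← recd]
      rw [Finset.sum_mul]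
      refine Finset.sum_congr rfl fun i _ => ?_
      rw [Finset.sum_mul]
      refine Finset.sum_congr rfl fun j _ => ?_
      rw [Finset.mul_sum]
      refine Finset.sum_congr rfl fun i' _ => ?_
      rw [Finset.mul_sum]
      refine Finset.sum_congr rfl fun j' _ => ?_
      exact smul_mul_smul_comm _ _ _ _
    rw [hcd]
    simp only [map_sum, map_smul]
  have prodRHS : R c * R d = ∑ i' ∈ sd, ∑ j' ∈ pd i', ∑ i ∈ sc, ∑ j ∈ pc i,
      ((Coalgebra.counit (R := k) i.1 * Coalgebra.counit (R := k) j.2) *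
        (Coalgebra.counit (R := k) i'.1 * Coalgebra.counit (R := k) j'.2)) •
        (R j.1 * R j'.1) := by
    rw [hc', hd', mul_comm]
    rw [Finset.sum_mul]
    refine Finset.sum_congr rfl fun i' _ => ?_
    rw [Finset.sum_mul]
    refine Finset.sum_congr rfl fun j' _ => ?_
    rw [Finset.mul_sum]
    refine Finset.sum_congr rfl fun i _ => ?_
    rw [Finset.mul_sum]
    refine Finset.sum_congr rfl fun j _ => ?_
    rw [smul_mul_smul_comm, mul_comm (Coalgebra.counit (R := k) i'.1 *
      Coalgebra.counit (R := k) j'.2), mul_comm (R j'.1)]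
  have T1 : (∑ q ∈ sc ×ˢ sd, ∑ j ∈ pc q.1 ×ˢ pd q.2,
      Coalgebra.counit (R := k) (B (q.1.1 * q.2.1 * (j.1.2 * j.2.2))) • R (j.1.1 * j.2.1))
      = ∑ i ∈ sc, ∑ j ∈ pc i, ∑ i' ∈ sd, ∑ j' ∈ pd i',
        ((Coalgebra.counit (R := k) i.1 * Coalgebra.counit (R := k) j.2) *
          (Coalgebra.counit (R := k) i'.1 * Coalgebra.counit (R := k) j'.2)) •
          R (j.1 * j'.1) := by
    simp only [Finset.sum_product]
    refine Finset.sum_congr rfl fun i _ => ?_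
    refine Eq.trans Finset.sum_comm ?_
    refine Finset.sum_congr rfl fun j _ => Finset.sum_congr rfl fun i' _ =>
      Finset.sum_congr rfl fun j' _ => ?_
    congr 1
    rw [hchi]
    simp only [Bialgebra.counit_mul]
    ring
  have T2 : (∑ i' ∈ sd, ∑ j' ∈ pd i', ∑ i ∈ sc, ∑ j ∈ pc i,
      Coalgebra.counit (R := k) (B (i.1 * j.2) * B (i'.1 * j'.2)) • (R j.1 * R j'.1))
      = ∑ i' ∈ sd, ∑ j' ∈ pd i', ∑ i ∈ sc, ∑ j ∈ pc i,
        ((Coalgebra.counit (R := k) i.1 * Coalgebra.counit (R := k) j.2) *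
          (Coalgebra.counit (R := k) i'.1 * Coalgebra.counit (R := k) j'.2)) •
          (R j.1 * R j'.1) := by
    refine Finset.sum_congr rfl fun i' _ => Finset.sum_congr rfl fun j' _ =>
      Finset.sum_congr rfl fun i _ => Finset.sum_congr rfl fun j _ => ?_
    congr 1
    rw [Bialgebra.counit_mul, hchi, hchi]
    simp only [Bialgebra.counit_mul]
  rw [hcd4, prodRHS, ← T1, ← T2]
  exact EQ2

end
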